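/- Let m ≠ 0 be a real number, let I ⊆ (0,∞) and J ⊆ ℝ be nonempty open intervals with J nondegenerate, and let F : I × J → ℝ be a C² function. Suppose there is a differentiable function φ : I → ℝ such that F_r(r,θ) = (φ(r)/r) cos mθ and F_θ(r,θ) = φ(r) sin mθ for all (r,θ) ∈ I × J. Then there exist real constants C₁ and C₂ such that φ(r) = −m C₁ r^{−m} and F(r,θ) = C₁ r^{−m} cos mθ + C₂ on I × J. -/

import Mathlib

noncomputable section

private lemma hIconv_aux {s : Set ℝ} (h : s.OrdConnected) : Convex ℝ s :=
  h.convex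

private lemma const_on' {s : Set ℝ} (hs : Convex ℝ s) {f : ℝ → ℝ}
    (hf : ∀ x ∈ s, HasDerivAt f 0 x) {x y : ℝ} (hx : x ∈ s) (hy : y ∈ s) : f x = f y := by
  have h : ‖f x - f y‖ ≤ 0 * ‖x - y‖ := hs.norm_image_sub_le_of_norm_hasDerivWithin_le
    (f' := fun _ => (0:ℝ)) (fun z hz => (hf z hz).hasDerivWithinAt)
    (fun z _ => by simp) hy hx
  have : ‖f x - f y‖ ≤ 0 := by simpa using h
  have := le_antisymm this (norm_nonneg _)
  rwa [norm_eq_zero, sub_eq_zero] at this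

/-- If `F` is C² on `I × J` (with `I ⊆ (0,∞)` a nonempty open interval and `J` a
nondegenerate open interval) and there is a differentiable `φ` on `I` with
`F_r = (φ(r)/r) cos mθ` and `F_θ = φ(r) sin mθ`, `m ≠ 0`, then `φ(r) = −m C₁ r^{−m}`
and `F(r,θ) = C₁ r^{−m} cos mθ + C₂` for some constants `C₁, C₂`. -/
theorem stmt_11 (m : ℝ) (hm : m ≠ 0)
    (I J : Set ℝ) (hIopen : IsOpen I) (hIint : I.OrdConnected) (hIne : I.Nonempty)
    (hIpos : I ⊆ Set.Ioi (0 : ℝ))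
    (hJopen : IsOpen J) (hJint : J.OrdConnected)
    (hJnd : ∃ y₁ ∈ J, ∃ y₂ ∈ J, y₁ ≠ y₂)
    (F : ℝ × ℝ → ℝ) (hF : ContDiffOn ℝ 2 F (I ×ˢ J))
    (φ : ℝ → ℝ) (hφ : DifferentiableOn ℝ φ I)
    (hFr : ∀ r ∈ I, ∀ θ ∈ J,
      deriv (fun s => F (s, θ)) r = φ r / r * Real.cos (m * θ))
    (hFθ : ∀ r ∈ I, ∀ θ ∈ J,
      deriv (fun t => F (r, t)) θ = φ r * Real.sin (m * θ)) :
    ∃ C₁ C₂ : ℝ,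
      (∀ r ∈ I, φ r = -m * C₁ * r ^ (-m)) ∧
      (∀ r ∈ I, ∀ θ ∈ J, F (r, θ) = C₁ * r ^ (-m) * Real.cos (m * θ) + C₂) := by
  obtain ⟨θ₀, hθ₀, θ₁', hθ₁', hne⟩ := hJnd
  have hIconv : Convex ℝ I := hIconv_aux hIint
  have hJconv : Convex ℝ J := hIconv_aux hJint
  have hopen : IsOpen (I ×ˢ J) := hIopen.prod hJopen
  have hFd : DifferentiableOn ℝ F (I ×ˢ J) := hF.differentiableOn (by norm_num)
  -- derivative of cos (m t)
  have hcosd : ∀ t : ℝ, HasDerivAt (fun t => Real.cos (m*t)) (-Real.sin (m*t) * m) t := by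
    intro t
    have h1 : HasDerivAt (fun t : ℝ => m * t) m t := by
      simpa using (hasDerivAt_id t).const_mul m
    exact (Real.hasDerivAt_cos (m*t)).comp t h1
  have hsind : ∀ t : ℝ, HasDerivAt (fun t => Real.sin (m*t)) (Real.cos (m*t) * m) t := by
    intro t
    have h1 : HasDerivAt (fun t : ℝ => m * t) m t := by
      simpa using (hasDerivAt_id t).const_mul m
    exact (Real.hasDerivAt_sin (m*t)).comp t h1
  -- slice derivatives as HasDerivAt
  have hslθ : ∀ r ∈ I, ∀ θ ∈ J, HasDerivAt (fun t => F (r,t)) (φ r * Real.sin (m*θ)) θ := by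
    intro r hr θ hθ
    have hd : DifferentiableAt ℝ (fun t => F (r, t)) θ :=
      (hFd.differentiableAt (hopen.mem_nhds ⟨hr, hθ⟩)).comp θ
        ((differentiableAt_const r).prodMk differentiableAt_id)
    have := hd.hasDerivAt
    rwa [hFθ r hr θ hθ] at this
  have hslr : ∀ r ∈ I, ∀ θ ∈ J, HasDerivAt (fun s => F (s,θ)) (φ r / r * Real.cos (m*θ)) r := by
    intro r hr θ hθ
    have hd : DifferentiableAt ℝ (fun s => F (s, θ)) r :=
      (hFd.differentiableAt (hopen.mem_nhds ⟨hr, hθ⟩)).comp r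
        (differentiableAt_id.prodMk (differentiableAt_const θ))
    have := hd.hasDerivAt
    rwa [hFr r hr θ hθ] at this
  -- K r θ := F(r,θ) + φ r / m * cos (m θ), constant in θ
  set K : ℝ → ℝ → ℝ := fun r θ => F (r,θ) + φ r / m * Real.cos (m*θ) with hKdef
  have hK : ∀ r ∈ I, ∀ θ ∈ J, K r θ = K r θ₀ := by
    intro r hr θ hθ
    refine const_on' hJconv (f := fun t => K r t) ?_ hθ hθ₀
    intro t ht
    have h1 := hslθ r hr t ht
    have h2 := ((hcosd t).const_mul (φ r / m))
    have h3 := h1.add h2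
    refine h3.congr_deriv ?_
    field_simp
    ring
  -- derivative of K in r
  have hD : ∀ s ∈ I, ∀ θ ∈ J,
      HasDerivAt (fun x => K x θ) ((φ s / s + deriv φ s / m) * Real.cos (m*θ)) s := by
    intro s hs θ hθ
    have hφs : HasDerivAt φ (deriv φ s) s :=
      (hφ.differentiableAt (hIopen.mem_nhds hs)).hasDerivAt
    have h2 := (hφs.div_const m).mul_const (Real.cos (m*θ))
    have h3 := (hslr s hs θ hθ).add h2
    refine h3.congr_deriv ?_
    ring
  -- two points of J with distinct cos (m θ)
  have hcosne : ∃ θ₁ ∈ J, Real.cos (m*θ₁) ≠ Real.cos (m*θ₀) := by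
    by_contra hcon
    push_neg at hcon
    have hsin : ∀ θ ∈ J, Real.sin (m*θ) = 0 := by
      intro θ hθ
      have hgc : (fun t => Real.cos (m*t)) =ᶠ[nhds θ] fun _ => Real.cos (m*θ₀) := by
        filter_upwards [hJopen.mem_nhds hθ] with t ht using hcon t ht
      have h2 : HasDerivAt (fun t => Real.cos (m*t)) 0 θ :=
        (hasDerivAt_const θ (Real.cos (m*θ₀))).congr_of_eventuallyEq hgc
      have := (hcosd θ).unique h2
      have := mul_eq_zero.mp this
      rcases this with h | h
      · linarith [neg_eq_zero.mp h]
      · exact absurd h hm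
    have hcos0 : Real.cos (m*θ₀) = 0 := by
      have hgc : (fun t => Real.sin (m*t)) =ᶠ[nhds θ₀] fun _ => (0:ℝ) := by
        filter_upwards [hJopen.mem_nhds hθ₀] with t ht using hsin t ht
      have h2 : HasDerivAt (fun t => Real.sin (m*t)) 0 θ₀ :=
        (hasDerivAt_const θ₀ (0:ℝ)).congr_of_eventuallyEq hgc
      have := (hsind θ₀).unique h2
      rcases mul_eq_zero.mp this with h | h
      · exact h
      · exact absurd h hm
    have := Real.sin_sq_add_cos_sq (m*θ₀)
    rw [hsin θ₀ hθ₀, hcos0] at this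
    norm_num at this
  obtain ⟨θ₁, hθ₁, hc⟩ := hcosne
  -- the ODE
  have hODE : ∀ r ∈ I, deriv φ r = -m * φ r / r := by
    intro r hr
    have hr0 : (0:ℝ) < r := hIpos hr
    have e1 := hD r hr θ₁ hθ₁
    have e0 := hD r hr θ₀ hθ₀
    have heq : (fun s => K s θ₁) =ᶠ[nhds r] (fun s => K s θ₀) := by
      filter_upwards [hIopen.mem_nhds hr] with s hs using hK s hs θ₁ hθ₁
    have e1' := e1.congr_of_eventuallyEq heq.symm
    have huniq := e1'.unique e0
    have hfac : φ r / r + deriv φ r / m = 0 := by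
      by_contra hne'
      exact hc (mul_left_cancel₀ hne' huniq)
    field_simp at hfac
    field_simp
    linarith
  -- φ r * r^m is constant
  obtain ⟨r₀, hr₀⟩ := hIne
  set c : ℝ := φ r₀ * r₀ ^ m with hcdef
  have hψ : ∀ r ∈ I, φ r * r ^ m = c := by
    intro r hr
    refine const_on' hIconv (f := fun s => φ s * s ^ m) ?_ hr hr₀
    intro s hs
    have hs0 : (0:ℝ) < s := hIpos hs
    have hφs : HasDerivAt φ (deriv φ s) s :=
      (hφ.differentiableAt (hIopen.mem_nhds hs)).hasDerivAt
    have hpow : HasDerivAt (fun x : ℝ => x ^ m) (m * s ^ (m-1)) s :=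
      Real.hasDerivAt_rpow_const (Or.inl hs0.ne')
    have h3 := hφs.mul hpow
    rw [hODE s hs] at h3
    refine h3.congr_deriv ?_
    have hkey : s ^ (m-1) = s ^ m / s := by
      rw [Real.rpow_sub hs0, Real.rpow_one]
    rw [hkey]
    field_simp
    ring
  have hφval : ∀ r ∈ I, φ r = c * r ^ (-m) := by
    intro r hr
    have hr0 : (0:ℝ) < r := hIpos hr
    have hm0 : r ^ m ≠ 0 := (Real.rpow_pos_of_pos hr0 m).ne'
    rw [Real.rpow_neg hr0.le]
    field_simp
    linarith [hψ r hr]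
  -- K (·, θ₀) is constant
  have hh : ∀ r ∈ I, K r θ₀ = K r₀ θ₀ := by
    intro r hr
    refine const_on' hIconv (f := fun s => K s θ₀) ?_ hr hr₀
    intro s hs
    have hs0 : (0:ℝ) < s := hIpos hs
    have := hD s hs θ₀ hθ₀
    rw [hODE s hs] at this
    have h0 : (φ s / s + -m * φ s / s / m) * Real.cos (m*θ₀) = 0 := by
      have hz : φ s / s + -m * φ s / s / m = 0 := by
        field_simp
        ring
      rw [hz, zero_mul]
    rwa [h0] at this
  refine ⟨-(c/m), K r₀ θ₀, ?_, ?_⟩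
  · intro r hr
    rw [hφval r hr]
    field_simp
  · intro r hr θ hθ
    have h1 : F (r, θ) = K r θ - φ r / m * Real.cos (m*θ) := by
      simp [hKdef]
    rw [h1, hK r hr θ hθ, hh r hr, hφval r hr]
    ring
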